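/- In the braid group Br_m, the elements s_{1,m}, s_{2,m}, …, s_{m-1,m} freely generate a free subgroup of rank m-1; that is, the homomorphism from the free group on m-1 generators y_1, …, y_{m-1} to Br_m sending y_i ↦ s_{i,m} is injective. -/

import Mathlib

/-- The braid relations on `m` generators `σ_1, …, σ_m` (0-indexed as `σ 0, …, σ (m-1)`):
`σ_i σ_j = σ_j σ_i` for `|i - j| > 1` and `σ_i σ_{i+1} σ_i = σ_{i+1} σ_i σ_{i+1}`. -/
def braidRels (m : ℕ) : Set (FreeGroup (Fin m)) :=
  {r | (∃ i j : Fin m, (i : ℕ) + 1 < (j : ℕ) ∧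
        r = FreeGroup.of i * FreeGroup.of j * (FreeGroup.of i)⁻¹ * (FreeGroup.of j)⁻¹) ∨
       (∃ i j : Fin m, (i : ℕ) + 1 = (j : ℕ) ∧
        r = FreeGroup.of i * FreeGroup.of j * FreeGroup.of i *
            (FreeGroup.of j * FreeGroup.of i * FreeGroup.of j)⁻¹)}

/-- The braid group `Br_n` on `n` strands, presented with generators `σ_1, …, σ_{n-1}`
(0-indexed) and the braid relations. -/
abbrev BraidGroup (n : ℕ) : Type := PresentedGroup (braidRels (n - 1))

/-- The standard generator `σ_{i+1}` of `Br_n` (0-indexed: `σ i` is the paper's `σ_{i+1}`). -/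
def σ {n : ℕ} (i : Fin (n - 1)) : BraidGroup n := PresentedGroup.of i

/-- The generator `σ_{i+1}` of `Br_n` for a natural-number index `i` (0-indexed), extended
by `1` outside the legal range. -/
def σ' {n : ℕ} (i : ℕ) : BraidGroup n := if h : i < n - 1 then σ ⟨i, h⟩ else 1

/-- The word `σ_{t-1} σ_{t-2} ⋯ σ_{s+1}` in `Br_n` (0-indexed generators). -/
def descProd {n : ℕ} (s t : ℕ) : BraidGroup n :=
  ((List.range (t - 1 - s)).map fun k => σ' (n := n) (t - 1 - k)).prod

/-- The pure braid generator `s_{i,j} = σ_{j-1} ⋯ σ_{i+1} σ_i² σ_{i+1}⁻¹ ⋯ σ_{j-1}⁻¹` of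
`Br_m`, for `i < j` (0-indexed strands `0, …, m-1`). -/
def pureGen {m : ℕ} (i j : ℕ) : BraidGroup m :=
  descProd i j * (σ' i) ^ 2 * (descProd i j)⁻¹


namespace PBF

variable {M : ℕ}

abbrev F (M : ℕ) := FreeGroup (Fin (M + 2))

/-- the `j`-th generator of `F M`, as a total function of `j : ℕ`. -/
def xg (M : ℕ) (j : ℕ) : F M := if h : j < M + 2 then FreeGroup.of ⟨j, h⟩ else 1

lemma xg_eq (j : ℕ) (h : j < M + 2) : xg M j = FreeGroup.of (⟨j, h⟩ : Fin (M + 2)) :=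
  dif_pos h

lemma lift_xg {G : Type*} [Group G] (f : Fin (M + 2) → G) (j : ℕ) (h : j < M + 2) :
    FreeGroup.lift f (xg M j) = f ⟨j, h⟩ := by
  rw [xg_eq j h, FreeGroup.lift_apply_of]

def fA (i : Fin (M + 1)) : Fin (M + 2) → F M := fun k =>
  if (k : ℕ) = (i : ℕ) then xg M i * xg M ((i : ℕ) + 1) * (xg M i)⁻¹
  else if (k : ℕ) = (i : ℕ) + 1 then xg M i
  else FreeGroup.of k

def gA (i : Fin (M + 1)) : Fin (M + 2) → F M := fun k =>
  if (k : ℕ) = (i : ℕ) then xg M ((i : ℕ) + 1)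
  else if (k : ℕ) = (i : ℕ) + 1 then (xg M ((i : ℕ) + 1))⁻¹ * xg M i * xg M ((i : ℕ) + 1)
  else FreeGroup.of k

lemma lift_fA_xg (i : Fin (M + 1)) (j : ℕ) (hj : j < M + 2) :
    FreeGroup.lift (fA i) (xg M j) =
      if j = (i : ℕ) then xg M i * xg M ((i : ℕ) + 1) * (xg M i)⁻¹
      else if j = (i : ℕ) + 1 then xg M i
      else xg M j := by
  rw [lift_xg _ j hj]
  simp only [fA]
  split_ifs with h1 h2 <;> [rfl; rfl; rw [xg_eq j hj]]

lemma lift_gA_xg (i : Fin (M + 1)) (j : ℕ) (hj : j < M + 2) :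
    FreeGroup.lift (gA i) (xg M j) =
      if j = (i : ℕ) then xg M ((i : ℕ) + 1)
      else if j = (i : ℕ) + 1 then (xg M ((i : ℕ) + 1))⁻¹ * xg M i * xg M ((i : ℕ) + 1)
      else xg M j := by
  rw [lift_xg _ j hj]
  simp only [gA]
  split_ifs with h1 h2 <;> [rfl; rfl; rw [xg_eq j hj]]

lemma gf (i : Fin (M + 1)) : ∀ x, FreeGroup.lift (gA i) (FreeGroup.lift (fA i) x) = x := by
  have hcomp : (FreeGroup.lift (gA i)).comp (FreeGroup.lift (fA i)) = MonoidHom.id (F M) := by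
    apply FreeGroup.ext_hom
    intro a
    have ha : (a : ℕ) < M + 2 := a.2
    have hi : (i : ℕ) < M + 2 := by omega
    have hi1 : (i : ℕ) + 1 < M + 2 := by omega
    simp only [MonoidHom.comp_apply, MonoidHom.id_apply, ← xg_eq (a : ℕ) a.2]
    rw [lift_fA_xg i a ha]
    split_ifs with h1 h2
    · rw [map_mul, map_mul, map_inv, lift_gA_xg i _ hi, lift_gA_xg i _ hi1,
        if_pos rfl, if_neg (show ¬((i:ℕ)+1 = (i:ℕ)) by omega), if_pos rfl, h1]
      group
    · rw [lift_gA_xg i _ hi, if_pos rfl, h2]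
    · rw [lift_gA_xg i _ ha, if_neg h1, if_neg h2]
  intro x
  exact DFunLike.congr_fun hcomp x

lemma fg (i : Fin (M + 1)) : ∀ x, FreeGroup.lift (fA i) (FreeGroup.lift (gA i) x) = x := by
  have hcomp : (FreeGroup.lift (fA i)).comp (FreeGroup.lift (gA i)) = MonoidHom.id (F M) := by
    apply FreeGroup.ext_hom
    intro a
    have ha : (a : ℕ) < M + 2 := a.2
    have hi : (i : ℕ) < M + 2 := by omega
    have hi1 : (i : ℕ) + 1 < M + 2 := by omega
    simp only [MonoidHom.comp_apply, MonoidHom.id_apply, ← xg_eq (a : ℕ) a.2]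
    rw [lift_gA_xg i a ha]
    split_ifs with h1 h2
    · rw [lift_fA_xg i _ hi1, if_neg (by omega), if_pos rfl, h1]
    · rw [map_mul, map_mul, map_inv, lift_fA_xg i _ hi, lift_fA_xg i _ hi1,
        if_pos rfl, if_neg (show ¬((i:ℕ)+1 = (i:ℕ)) by omega), if_pos rfl, h2]
      group
    · rw [lift_fA_xg i _ ha, if_neg h1, if_neg h2]
  intro x
  exact DFunLike.congr_fun hcomp x

/-- The Artin automorphism associated to `σ_i`. -/
def A (i : Fin (M + 1)) : MulAut (F M) :=
  { toFun := FreeGroup.lift (fA i)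
    invFun := FreeGroup.lift (gA i)
    left_inv := gf i
    right_inv := fg i
    map_mul' := map_mul _ }

lemma A_xg (i : Fin (M + 1)) (j : ℕ) (hj : j < M + 2) :
    A i (xg M j) =
      if j = (i : ℕ) then xg M i * xg M ((i : ℕ) + 1) * (xg M i)⁻¹
      else if j = (i : ℕ) + 1 then xg M i
      else xg M j :=
  lift_fA_xg i j hj


lemma A_xg_self (i : Fin (M + 1)) :
    A i (xg M (i : ℕ)) = xg M i * xg M ((i : ℕ) + 1) * (xg M i)⁻¹ := by
  rw [A_xg i i (by omega), if_pos rfl]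

lemma A_xg_succ (i : Fin (M + 1)) : A i (xg M ((i : ℕ) + 1)) = xg M i := by
  rw [A_xg i _ (by omega), if_neg (by omega), if_pos rfl]

lemma A_xg_other (i : Fin (M + 1)) (j : ℕ) (h1 : j ≠ (i : ℕ)) (h2 : j ≠ (i : ℕ) + 1) :
    A i (xg M j) = xg M j := by
  by_cases hj : j < M + 2
  · rw [A_xg i j hj, if_neg h1, if_neg h2]
  · have : xg M j = 1 := dif_neg hj
    rw [this, map_one]

lemma aut_ext {e₁ e₂ : MulAut (F M)}
    (h : ∀ k : Fin (M + 2), e₁ (FreeGroup.of k) = e₂ (FreeGroup.of k)) :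
    e₁ = e₂ := by
  apply MulEquiv.ext
  intro x
  exact DFunLike.congr_fun (FreeGroup.ext_hom e₁.toMonoidHom e₂.toMonoidHom h) x

lemma of_eq_xg (k : Fin (M + 2)) : (FreeGroup.of k : F M) = xg M (k : ℕ) := by
  rw [xg_eq _ k.2]

lemma A_comm (i j : Fin (M + 1)) (h : (i : ℕ) + 1 < (j : ℕ)) : A i * A j = A j * A i := by
  apply aut_ext
  intro k
  have ea := A_xg_self i
  have eb := A_xg_succ i
  have e1 : A j (xg M (i : ℕ)) = xg M (i : ℕ) := A_xg_other j _ (by omega) (by omega)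
  have e2 : A j (xg M ((i : ℕ) + 1)) = xg M ((i : ℕ) + 1) := A_xg_other j _ (by omega) (by omega)
  have e3 := A_xg_self j
  have e4 := A_xg_succ j
  have e5 : A i (xg M (j : ℕ)) = xg M (j : ℕ) := A_xg_other i _ (by omega) (by omega)
  have e6 : A i (xg M ((j : ℕ) + 1)) = xg M ((j : ℕ) + 1) := A_xg_other i _ (by omega) (by omega)
  simp only [MulAut.mul_apply, of_eq_xg k]
  by_cases h1 : (k : ℕ) = (i : ℕ)
  · simp only [h1, map_mul, map_inv, ea, eb, e1, e2]
  by_cases h2 : (k : ℕ) = (i : ℕ) + 1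
  · simp only [h2, map_mul, map_inv, ea, eb, e1, e2]
  by_cases h3 : (k : ℕ) = (j : ℕ)
  · simp only [h3, map_mul, map_inv, e3, e4, e5, e6]
  by_cases h4 : (k : ℕ) = (j : ℕ) + 1
  · simp only [h4, map_mul, map_inv, e3, e4, e5, e6]
  · have f1 : A i (xg M (k : ℕ)) = xg M (k : ℕ) := A_xg_other i _ h1 h2
    have f2 : A j (xg M (k : ℕ)) = xg M (k : ℕ) := A_xg_other j _ h3 h4
    simp only [f1, f2]

lemma A_braid (i j : Fin (M + 1)) (h : (i : ℕ) + 1 = (j : ℕ)) :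
    A i * A j * A i = A j * A i * A j := by
  have hj : (j : ℕ) = (i : ℕ) + 1 := h.symm
  apply aut_ext
  intro k
  have ea := A_xg_self i
  have eb := A_xg_succ i
  have ec : A i (xg M ((i : ℕ) + 2)) = xg M ((i : ℕ) + 2) :=
    A_xg_other i _ (by omega) (by omega)
  have fa : A j (xg M (i : ℕ)) = xg M (i : ℕ) := A_xg_other j _ (by omega) (by omega)
  have fb : A j (xg M ((i : ℕ) + 1)) =
      xg M ((i : ℕ) + 1) * xg M ((i : ℕ) + 2) * (xg M ((i : ℕ) + 1))⁻¹ := by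
    have := A_xg_self j
    rw [hj, show (i : ℕ) + 1 + 1 = (i : ℕ) + 2 by omega] at this
    exact this
  have fc : A j (xg M ((i : ℕ) + 2)) = xg M ((i : ℕ) + 1) := by
    have := A_xg_succ j
    rw [hj, show (i : ℕ) + 1 + 1 = (i : ℕ) + 2 by omega] at this
    exact this
  simp only [MulAut.mul_apply, of_eq_xg k]
  by_cases h1 : (k : ℕ) = (i : ℕ)
  · simp only [h1, map_mul, map_inv, ea, eb, ec, fa, fb, fc]
    group
  by_cases h2 : (k : ℕ) = (i : ℕ) + 1
  · simp only [h2, map_mul, map_inv, ea, eb, ec, fa, fb, fc]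
  by_cases h3 : (k : ℕ) = (i : ℕ) + 2
  · simp only [h3, map_mul, map_inv, ea, eb, ec, fa, fb, fc]
  · have f1 : A i (xg M (k : ℕ)) = xg M (k : ℕ) := A_xg_other i _ h1 h2
    have f2 : A j (xg M (k : ℕ)) = xg M (k : ℕ) := A_xg_other j _ (by omega) (by omega)
    simp only [f1, f2]

lemma rels_hold :
    ∀ r ∈ braidRels (M + 1), FreeGroup.lift (fun i : Fin (M + 1) => (A i : MulAut (F M))) r = 1 := by
  rintro r (⟨i, j, hij, rfl⟩ | ⟨i, j, hij, rfl⟩) <;>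
    simp only [map_mul, map_inv, FreeGroup.lift_apply_of]
  · rw [A_comm i j hij]
    group
  · rw [show (A i : MulAut (F M)) * A j * A i = A j * A i * A j from A_braid i j hij]
    group

/-- The Artin representation of the braid group. -/
def ρ : BraidGroup (M + 2) →* MulAut (F M) := PresentedGroup.toGroup (rels_hold (M := M))

lemma rho_sigma' (k : ℕ) (hk : k < M + 1) : ρ (σ' (n := M + 2) k) = A ⟨k, hk⟩ := by
  have hk' : k < M + 2 - 1 := by omega
  rw [σ', dif_pos hk']
  exact PresentedGroup.toGroup.of (rels_hold (M := M))


/-- `Wfun M i = x_{i+1} x_{i+2} ⋯ x_M`. -/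
def Wfun (M : ℕ) (i : ℕ) : F M := ((List.range (M - i)).map fun t => xg M (i + 1 + t)).prod

lemma Wfun_ge (i : ℕ) (h : M ≤ i) : Wfun M i = 1 := by
  simp [Wfun, Nat.sub_eq_zero_of_le h]

lemma Wfun_succ (i : ℕ) (h : i < M) : Wfun M i = xg M (i + 1) * Wfun M (i + 1) := by
  unfold Wfun
  rw [show M - i = (M - (i + 1)) + 1 by omega, List.range_succ_eq_map, List.map_cons,
    List.prod_cons, List.map_map]
  simp only [Nat.add_zero]
  congr 1
  refine congrArg List.prod (List.map_congr_left fun a _ => ?_)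
  simp only [Function.comp_apply]
  congr 1
  omega

lemma hom_Wfun (ψ : F M →* F M) (i : ℕ)
    (hfix : ∀ j, i + 1 ≤ j → j ≤ M → ψ (xg M j) = xg M j) : ψ (Wfun M i) = Wfun M i := by
  have key : ∀ d, ∀ i, M - i = d → (∀ j, i + 1 ≤ j → j ≤ M → ψ (xg M j) = xg M j) →
      ψ (Wfun M i) = Wfun M i := by
    intro d
    induction d with
    | zero => intro i hd _; rw [Wfun_ge i (by omega), map_one]
    | succ d ih =>
      intro i hd hf
      rw [Wfun_succ i (by omega), map_mul, hf (i + 1) le_rfl (by omega),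
        ih (i + 1) (by omega) (fun j h1 h2 => hf j (by omega) h2)]
  exact key (M - i) i rfl hfix

lemma A_xg_self' (k : ℕ) (hk : k < M + 1) :
    A (⟨k, hk⟩ : Fin (M + 1)) (xg M k) = xg M k * xg M (k + 1) * (xg M k)⁻¹ :=
  A_xg_self ⟨k, hk⟩

lemma A_xg_succ' (k : ℕ) (hk : k < M + 1) :
    A (⟨k, hk⟩ : Fin (M + 1)) (xg M (k + 1)) = xg M k :=
  A_xg_succ ⟨k, hk⟩

lemma A_xg_other' (k j : ℕ) (hk : k < M + 1) (h1 : j ≠ k) (h2 : j ≠ k + 1) :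
    A (⟨k, hk⟩ : Fin (M + 1)) (xg M j) = xg M j :=
  A_xg_other ⟨k, hk⟩ j h1 h2

lemma descProd_top : descProd (n := M + 2) M (M + 1) = 1 := by
  simp [descProd]

lemma descProd_succ (i : ℕ) (h : i < M) :
    descProd (n := M + 2) i (M + 1) = descProd (n := M + 2) (i + 1) (M + 1) * σ' (i + 1) := by
  unfold descProd
  simp only [Nat.add_sub_cancel]
  rw [show M - i = (M - (i + 1)) + 1 by omega, List.range_succ, List.map_append,
    List.prod_append, List.map_singleton, List.prod_singleton,
    show M - (M - (i + 1)) = i + 1 by omega]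

lemma E_apply (i : ℕ) (hi : i ≤ M) (j : ℕ) (hj : j < M + 2) :
    ρ (descProd (n := M + 2) i (M + 1)) (xg M j) =
      if j ≤ i then xg M j
      else if j = i + 1 then Wfun M i * xg M (M + 1) * (Wfun M i)⁻¹
      else xg M (j - 1) := by
  have main : ∀ d, ∀ i, i ≤ M → M - i = d → ∀ j, j < M + 2 →
      ρ (descProd (n := M + 2) i (M + 1)) (xg M j) =
        if j ≤ i then xg M j
        else if j = i + 1 then Wfun M i * xg M (M + 1) * (Wfun M i)⁻¹
        else xg M (j - 1) := by
    intro d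
    induction d with
    | zero =>
      intro i hi hd j hj
      have hiM : i = M := by omega
      rw [hiM, descProd_top, map_one, MulAut.one_apply]
      split_ifs with h1 h2
      · rfl
      · rw [Wfun_ge M le_rfl, h2]
        group
      · omega
    | succ d ih =>
      intro i hi hd j hj
      have hiM : i < M := by omega
      rw [descProd_succ i hiM, map_mul, MulAut.mul_apply, rho_sigma' (i + 1) (by omega)]
      rcases le_or_gt j i with hji | hji
      · rw [A_xg_other' (i + 1) j (by omega) (by omega) (by omega),
          ih (i + 1) (by omega) (by omega) j hj]
        split_ifs <;> first | rfl | omega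
      rcases Nat.lt_or_ge j (i + 2) with hj2 | hj2
      · -- j = i + 1
        have hj1 : j = i + 1 := by omega
        rw [hj1, A_xg_self' (i + 1) (by omega)]
        simp only [map_mul, map_inv]
        rw [ih (i + 1) (by omega) (by omega) (i + 1) (by omega),
          ih (i + 1) (by omega) (by omega) (i + 2) (by omega)]
        split_ifs with a1 a2 a3 a4 a5
        any_goals omega
        rw [Wfun_succ i hiM]
        group
      · rcases Nat.eq_or_lt_of_le hj2 with hj3 | hj3
        · -- j = i + 2
          rw [← hj3, A_xg_succ' (i + 1) (by omega),
            ih (i + 1) (by omega) (by omega) (i + 1) (by omega)]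
          split_ifs
          all_goals first | rfl | omega | (congr 1; omega)
        · -- j ≥ i + 3
          rw [A_xg_other' (i + 1) j (by omega) (by omega) (by omega),
            ih (i + 1) (by omega) (by omega) j hj]
          split_ifs <;> first | rfl | omega
  exact main (M - i) i hi rfl j hj

/-- The quotient map killing the last generator. -/
def qh (M : ℕ) : F M →* F M :=
  FreeGroup.lift fun k => if (k : ℕ) = M + 1 then 1 else FreeGroup.of k

lemma qh_xg (j : ℕ) (hj : j < M + 1) : qh M (xg M j) = xg M j := by
  unfold qh
  rw [lift_xg _ j (by omega)]
  simp only [if_neg (show ¬(j = M + 1) by omega)]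
  rw [← xg_eq]

lemma qh_xg_top : qh M (xg M (M + 1)) = 1 := by
  unfold qh
  rw [lift_xg _ (M + 1) (by omega)]
  simp

/-- The conjugator `C_i = (x_{i+1}⋯x_M)⁻¹ x_i (x_{i+1}⋯x_M)`. -/
def Cg (M : ℕ) (i : ℕ) : F M := (Wfun M i)⁻¹ * xg M i * Wfun M i


lemma ps_conj (i : ℕ) (hi : i < M + 1) (y : F M) :
    ρ (pureGen (m := M + 2) i (M + 1)) (ρ (descProd (n := M + 2) i (M + 1)) y) =
      ρ (descProd (n := M + 2) i (M + 1))
        (A (⟨i, hi⟩ : Fin (M + 1)) (A (⟨i, hi⟩ : Fin (M + 1)) y)) := by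
  unfold pureGen
  rw [map_mul, map_mul, map_inv, map_pow, rho_sigma' i hi]
  simp only [MulAut.mul_apply, pow_two, MulAut.inv_apply_self]

lemma ps_xg_lt (i : ℕ) (hi : i ≤ M) (j : ℕ) (hj : j < i) :
    ρ (pureGen (m := M + 2) i (M + 1)) (xg M j) = xg M j := by
  have hE : ρ (descProd (n := M + 2) i (M + 1)) (xg M j) = xg M j := by
    rw [E_apply i hi j (by omega), if_pos (by omega)]
  calc ρ (pureGen (m := M + 2) i (M + 1)) (xg M j)
      = ρ (pureGen (m := M + 2) i (M + 1)) (ρ (descProd (n := M + 2) i (M + 1)) (xg M j)) := by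
        rw [hE]
    _ = xg M j := by
        rw [ps_conj i (by omega), A_xg_other' i j (by omega) (by omega) (by omega),
          A_xg_other' i j (by omega) (by omega) (by omega), hE]

lemma ps_xg_mid (i : ℕ) (hi : i ≤ M) (j : ℕ) (h1 : i + 1 ≤ j) (h2 : j ≤ M) :
    ρ (pureGen (m := M + 2) i (M + 1)) (xg M j) = xg M j := by
  have hE : ρ (descProd (n := M + 2) i (M + 1)) (xg M (j + 1)) = xg M j := by
    rw [E_apply i hi (j + 1) (by omega), if_neg (by omega), if_neg (by omega)]
    congr 1
  calc ρ (pureGen (m := M + 2) i (M + 1)) (xg M j)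
      = ρ (pureGen (m := M + 2) i (M + 1))
          (ρ (descProd (n := M + 2) i (M + 1)) (xg M (j + 1))) := by rw [hE]
    _ = xg M j := by
        rw [ps_conj i (by omega), A_xg_other' i (j + 1) (by omega) (by omega) (by omega),
          A_xg_other' i (j + 1) (by omega) (by omega) (by omega), hE]

lemma ps_Wfun (i : ℕ) (hi : i ≤ M) :
    ρ (pureGen (m := M + 2) i (M + 1)) (Wfun M i) = Wfun M i := by
  have := hom_Wfun (ρ (pureGen (m := M + 2) i (M + 1)) : MulAut (F M)).toMonoidHom i
    (fun j hj1 hj2 => ps_xg_mid i hi j hj1 hj2)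
  exact this

lemma E_top (i : ℕ) (hi : i ≤ M) :
    ρ (descProd (n := M + 2) i (M + 1)) (xg M (i + 1)) =
      Wfun M i * xg M (M + 1) * (Wfun M i)⁻¹ := by
  rw [E_apply i hi (i + 1) (by omega), if_neg (by omega), if_pos rfl]

lemma ps_xg_top (i : ℕ) (hi : i ≤ M) :
    ρ (pureGen (m := M + 2) i (M + 1)) (xg M (M + 1)) =
      Cg M i * xg M (M + 1) * (Cg M i)⁻¹ := by
  have hx : xg M (M + 1) =
      (Wfun M i)⁻¹ * ρ (descProd (n := M + 2) i (M + 1)) (xg M (i + 1)) * Wfun M i := by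
    rw [E_top i hi]
    group
  rw [hx, map_mul, map_mul, map_inv, ps_Wfun i hi]
  rw [ps_conj i (by omega), A_xg_succ' i (by omega), A_xg_self' i (by omega)]
  simp only [map_mul, map_inv]
  rw [E_apply i hi i (by omega), if_pos le_rfl, E_top i hi]
  unfold Cg
  group

lemma ps_xg_eq (i : ℕ) (hi : i ≤ M) :
    ρ (pureGen (m := M + 2) i (M + 1)) (xg M i) =
      (xg M i * (Wfun M i * xg M (M + 1) * (Wfun M i)⁻¹) * (xg M i)⁻¹) * xg M i *
        (xg M i * (Wfun M i * xg M (M + 1) * (Wfun M i)⁻¹) * (xg M i)⁻¹)⁻¹ := by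
  have hE : ρ (descProd (n := M + 2) i (M + 1)) (xg M i) = xg M i := by
    rw [E_apply i hi i (by omega), if_pos le_rfl]
  calc ρ (pureGen (m := M + 2) i (M + 1)) (xg M i)
      = ρ (pureGen (m := M + 2) i (M + 1))
          (ρ (descProd (n := M + 2) i (M + 1)) (xg M i)) := by rw [hE]
    _ = _ := by
        rw [ps_conj i (by omega), A_xg_self' i (by omega)]
        simp only [map_mul, map_inv]
        rw [A_xg_self' i (by omega), A_xg_succ' i (by omega)]
        simp only [map_mul, map_inv]
        rw [hE, E_top i hi]

lemma qh_Wfun (i : ℕ) : qh M (Wfun M i) = Wfun M i :=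
  hom_Wfun (qh M) i (fun j hj1 hj2 => qh_xg j (by omega))

lemma qh_Cg (i : ℕ) (hi : i ≤ M) : qh M (Cg M i) = Cg M i := by
  unfold Cg
  rw [map_mul, map_mul, map_inv, qh_Wfun, qh_xg i (by omega)]

lemma qh_ps (i : ℕ) (hi : i ≤ M) (z : F M) :
    qh M (ρ (pureGen (m := M + 2) i (M + 1)) z) = qh M z := by
  have hcomp : (qh M).comp (ρ (pureGen (m := M + 2) i (M + 1)) : MulAut (F M)).toMonoidHom
      = qh M := by
    apply FreeGroup.ext_hom
    intro a
    have ha : (a : ℕ) < M + 2 := a.2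
    simp only [MonoidHom.comp_apply, MulEquiv.coe_toMonoidHom, of_eq_xg a]
    rcases Nat.lt_or_ge (a : ℕ) i with h1 | h1
    · rw [ps_xg_lt i hi _ h1]
    rcases Nat.eq_or_lt_of_le h1 with h2 | h2
    · rw [← h2, ps_xg_eq i hi]
      simp only [map_mul, map_inv, qh_Wfun, qh_xg_top, qh_xg i (show i < M + 1 by omega)]
      group
    rcases Nat.lt_or_ge (a : ℕ) (M + 1) with h3 | h3
    · rw [ps_xg_mid i hi _ (by omega) (by omega)]
    · have : (a : ℕ) = M + 1 := by omega
      rw [this, ps_xg_top i hi]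
      simp only [map_mul, map_inv, qh_Cg i hi, qh_xg_top]
      group
  exact DFunLike.congr_fun hcomp z


/-- `Tfun M j = x_M x_{M-1} ⋯ x_j`. -/
def Tfun (M : ℕ) (j : ℕ) : F M := ((List.range (M + 1 - j)).map fun t => xg M (M - t)).prod

lemma Tfun_ge (j : ℕ) (h : M + 1 ≤ j) : Tfun M j = 1 := by
  simp [Tfun, Nat.sub_eq_zero_of_le h]

lemma Tfun_succ (j : ℕ) (h : j ≤ M) : Tfun M j = Tfun M (j + 1) * xg M j := by
  unfold Tfun
  rw [show M + 1 - j = (M + 1 - (j + 1)) + 1 by omega, List.range_succ, List.map_append,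
    List.prod_append, List.map_singleton, List.prod_singleton,
    show M - (M + 1 - (j + 1)) = j by omega]

/-- The untwisting endomorphism. -/
def κh (M : ℕ) : F M →* F M :=
  FreeGroup.lift fun k => Tfun M ((k : ℕ) + 1) * FreeGroup.of k * (Tfun M ((k : ℕ) + 1))⁻¹

lemma κh_xg (j : ℕ) (hj : j < M + 2) :
    κh M (xg M j) = Tfun M (j + 1) * xg M j * (Tfun M (j + 1))⁻¹ := by
  unfold κh
  rw [lift_xg _ j hj, ← xg_eq j hj]

lemma κh_Wfun (i : ℕ) : κh M (Wfun M i) = Tfun M (i + 1) := by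
  have key : ∀ d, ∀ i, M - i = d → κh M (Wfun M i) = Tfun M (i + 1) := by
    intro d
    induction d with
    | zero =>
      intro i hd
      rw [Wfun_ge i (by omega), map_one, Tfun_ge (i + 1) (by omega)]
    | succ d ih =>
      intro i hd
      rw [Wfun_succ i (by omega), map_mul, ih (i + 1) (by omega),
        κh_xg (i + 1) (by omega), Tfun_succ (i + 1) (by omega)]
      group
  exact key (M - i) i rfl

lemma κh_Cg (i : ℕ) (hi : i ≤ M) : κh M (Cg M i) = xg M i := by
  unfold Cg
  rw [map_mul, map_mul, map_inv, κh_Wfun, κh_xg i (by omega)]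
  group

/-- Retraction to the free group on the first `M+1` generators. -/
def rh (M : ℕ) : F M →* FreeGroup (Fin (M + 1)) :=
  FreeGroup.lift fun k : Fin (M + 2) =>
    if h : (k : ℕ) < M + 1 then (FreeGroup.of (⟨(k : ℕ), h⟩ : Fin (M + 1)))⁻¹ else 1

lemma rh_xg (j : ℕ) (hj : j < M + 1) :
    rh M (xg M j) = (FreeGroup.of (⟨j, hj⟩ : Fin (M + 1)))⁻¹ := by
  unfold rh
  rw [lift_xg _ j (by omega), dif_pos hj]

/-- The homomorphism recording conjugators. -/
def LC (M : ℕ) : FreeGroup (Fin (M + 1)) →* F M :=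
  FreeGroup.lift fun i : Fin (M + 1) => (Cg M (i : ℕ))⁻¹

lemma LC_eq_one {w : FreeGroup (Fin (M + 1))} (h : LC M w = 1) : w = 1 := by
  have hcomp : (rh M).comp ((κh M).comp (LC M)) = MonoidHom.id _ := by
    apply FreeGroup.ext_hom
    intro i
    have hi : (i : ℕ) ≤ M := by omega
    simp only [MonoidHom.comp_apply, MonoidHom.id_apply]
    rw [show LC M (FreeGroup.of i) = (Cg M (i : ℕ))⁻¹ from FreeGroup.lift_apply_of, map_inv,
      κh_Cg (i : ℕ) hi, map_inv, rh_xg (i : ℕ) i.2, inv_inv, Fin.eta]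
  calc w = ((rh M).comp ((κh M).comp (LC M))) w := by rw [hcomp]; rfl
    _ = 1 := by simp only [MonoidHom.comp_apply, h, map_one]

/-! ### The lamplighter permutation representation -/

abbrev PP (M : ℕ) := (F M →₀ ℤ) × F M

def mulE (g : F M) : Equiv.Perm (PP M) :=
  Equiv.prodCongr (Equiv.refl _) (Equiv.mulLeft g)

noncomputable def shiftE : Equiv.Perm (PP M) where
  toFun p := (p.1 + Finsupp.single p.2 1, p.2)
  invFun p := (p.1 - Finsupp.single p.2 1, p.2)
  left_inv p := by simp
  right_inv p := by simp

noncomputable def η (M : ℕ) : F M →* Equiv.Perm (PP M) :=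
  FreeGroup.lift fun k : Fin (M + 2) =>
    if (k : ℕ) = M + 1 then shiftE else mulE (FreeGroup.of k)

lemma pure_eq (k : Fin (M + 2)) : (pure k : F M) = FreeGroup.of k := rfl

lemma η_of_top : η M (xg M (M + 1)) = shiftE := by
  unfold η
  rw [lift_xg _ (M + 1) (by omega), if_pos rfl]

lemma η_of_low (k : Fin (M + 2)) (hk : (k : ℕ) < M + 1) :
    η M (FreeGroup.of k) = mulE (FreeGroup.of k) := by
  unfold η
  rw [FreeGroup.lift_apply_of, if_neg (by omega)]

lemma η_snd (g : F M) : ∀ p : PP M, ((η M g) p).2 = qh M g * p.2 := by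
  induction g using FreeGroup.induction_on with
  | C1 => intro p; simp
  | of k =>
    intro p
    by_cases hk : (k : ℕ) = M + 1
    · have hx : (FreeGroup.of k : F M) = xg M (M + 1) := by rw [of_eq_xg k, hk]
      rw [hx, η_of_top, qh_xg_top, one_mul]
      rfl
    · rw [η_of_low k (by omega)]
      have : qh M (FreeGroup.of k) = FreeGroup.of k := by
        rw [of_eq_xg k, qh_xg _ (by omega)]
      rw [this]
      rfl
  | inv_of k ih =>
    intro p
    have h1 : η M (FreeGroup.of k) ((η M (FreeGroup.of k))⁻¹ p) = p :=
      Equiv.apply_symm_apply _ _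
    have h2 := ih ((η M (FreeGroup.of k))⁻¹ p)
    rw [h1] at h2
    rw [map_inv, map_inv]
    have : ((η M (FreeGroup.of k))⁻¹ p).2 = (qh M (FreeGroup.of k))⁻¹ * p.2 := by
      rw [eq_inv_mul_iff_mul_eq, ← h2]
    rw [this]
  | mul g h ihg ihh =>
    intro p
    rw [map_mul, map_mul, Equiv.Perm.mul_apply, ihg, ihh, mul_assoc]

lemma η_fst (g : F M) : ∀ (f Δ : F M →₀ ℤ) (b : F M),
    η M g (f + Δ, b) = ((η M g (f, b)).1 + Δ, (η M g (f, b)).2) := by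
  induction g using FreeGroup.induction_on with
  | C1 => intro f Δ b; simp
  | of k =>
    intro f Δ b
    by_cases hk : (k : ℕ) = M + 1
    · have hx : (FreeGroup.of k : F M) = xg M (M + 1) := by rw [of_eq_xg k, hk]
      rw [hx, η_of_top]
      show (f + Δ + Finsupp.single b 1, b) = (f + Finsupp.single b 1 + Δ, b)
      rw [add_right_comm]
    · rw [η_of_low k (by omega)]
      rfl
  | inv_of k ih =>
    intro f Δ b
    rw [map_inv]
    set e := η M (FreeGroup.of k)
    set p' := e⁻¹ (f, b) with hp'
    have h1 : e p' = (f, b) := Equiv.apply_symm_apply _ _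
    have key : e (p'.1 + Δ, p'.2) = (f + Δ, b) := by
      rw [ih p'.1 Δ p'.2]
      have : ((p'.1, p'.2) : PP M) = p' := rfl
      rw [this, h1]
    calc e⁻¹ (f + Δ, b) = e⁻¹ (e (p'.1 + Δ, p'.2)) := by rw [key]
      _ = (p'.1 + Δ, p'.2) := Equiv.symm_apply_apply _ _
      _ = ((e⁻¹ (f, b)).1 + Δ, (e⁻¹ (f, b)).2) := rfl
  | mul g h ihg ihh =>
    intro f Δ b
    rw [map_mul, Equiv.Perm.mul_apply, ihh f Δ b, Equiv.Perm.mul_apply]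
    have : ((η M h (f, b)).1, (η M h (f, b)).2) = η M h (f, b) := rfl
    rw [ihg (η M h (f, b)).1 Δ (η M h (f, b)).2, this]

lemma comm_qh (c : F M) (hc : c * xg M (M + 1) = xg M (M + 1) * c) : qh M c = 1 := by
  have he := congrArg (η M) hc
  rw [map_mul, map_mul] at he
  have he2 := congrFun (congrArg (fun (e : Equiv.Perm (PP M)) => (e : PP M → PP M)) he)
    ((0 : F M →₀ ℤ), (1 : F M))
  simp only [Equiv.Perm.mul_apply] at he2
  rw [η_of_top] at he2
  have hx : shiftE ((0 : F M →₀ ℤ), (1 : F M)) = ((0 : F M →₀ ℤ) + Finsupp.single 1 1, 1) := by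
    show ((0 : F M →₀ ℤ) + Finsupp.single (1 : F M) 1, (1 : F M)) = _
    rfl
  rw [hx, η_fst c 0 (Finsupp.single 1 1) 1] at he2
  have hb : (η M c (0, 1)).2 = qh M c := by rw [η_snd c (0, 1), mul_one]
  have hsh : shiftE (η M c ((0 : F M →₀ ℤ), (1 : F M))) =
      ((η M c (0, 1)).1 + Finsupp.single ((η M c (0, 1)).2) 1, (η M c (0, 1)).2) := rfl
  rw [hsh] at he2
  have hfst := congrArg Prod.fst he2
  simp only at hfst
  have hsingle : Finsupp.single (1 : F M) (1 : ℤ) = Finsupp.single ((η M c (0, 1)).2) 1 :=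
    add_left_cancel hfst
  have := Finsupp.single_left_injective (α := F M) (one_ne_zero (α := ℤ)) hsingle
  rw [hb] at this
  exact this.symm


/-! ### Semidirect product bookkeeping -/

abbrev SD (M : ℕ) : Type :=
  SemidirectProduct (F M) (MulAut (F M)) (MonoidHom.id (MulAut (F M)))

/-- The free group mapping to the braid group by `i ↦ s_{i,M+1}`. -/
def Lm (M : ℕ) : FreeGroup (Fin (M + 1)) →* BraidGroup (M + 2) :=
  FreeGroup.lift fun i : Fin (M + 1) => pureGen (m := M + 2) (i : ℕ) (M + 1)

def KH (M : ℕ) : FreeGroup (Fin (M + 1)) →* SD M × F M :=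
  FreeGroup.lift fun i : Fin (M + 1) =>
    ((⟨(Cg M (i : ℕ))⁻¹, ρ (pureGen (m := M + 2) (i : ℕ) (M + 1))⟩ : SD M),
      (Cg M (i : ℕ))⁻¹)

def GoodK (M : ℕ) (pz : SD M × F M) : Prop :=
  pz.1.right (xg M (M + 1)) = pz.1.left⁻¹ * xg M (M + 1) * pz.1.left ∧
  (∀ z, qh M (pz.1.right z) = qh M z) ∧
  qh M pz.1.left = pz.2

lemma GoodK_one : GoodK M 1 := by
  refine ⟨?_, fun z => ?_, ?_⟩
  · show (1 : MulAut (F M)) _ = ((1 : SD M).left)⁻¹ * _ * (1 : SD M).left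
    rw [SemidirectProduct.one_left, MulAut.one_apply]
    group
  · show qh M ((1 : MulAut (F M)) z) = qh M z
    rw [MulAut.one_apply]
  · show qh M (1 : SD M).left = (1 : SD M × F M).2
    rw [SemidirectProduct.one_left, map_one]
    rfl

lemma GoodK_mul {p q : SD M × F M} (hp : GoodK M p) (hq : GoodK M q) : GoodK M (p * q) := by
  obtain ⟨hp1, hp2, hp3⟩ := hp
  obtain ⟨hq1, hq2, hq3⟩ := hq
  refine ⟨?_, fun z => ?_, ?_⟩
  · show ((p.1 * q.1).right) _ = ((p.1 * q.1).left)⁻¹ * _ * (p.1 * q.1).left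
    rw [SemidirectProduct.mul_right, SemidirectProduct.mul_left, MulAut.mul_apply, hq1,
      map_mul, map_mul, map_inv, hp1]
    simp only [MonoidHom.id_apply]
    group
  · show qh M ((p.1 * q.1).right z) = qh M z
    rw [SemidirectProduct.mul_right, MulAut.mul_apply, hp2, hq2]
  · show qh M ((p.1 * q.1).left) = (p * q).2
    rw [SemidirectProduct.mul_left, map_mul]
    simp only [MonoidHom.id_apply]
    rw [hp2, hp3, hq3]
    rfl

lemma GoodK_inv {p : SD M × F M} (hp : GoodK M p) : GoodK M p⁻¹ := by
  obtain ⟨hp1, hp2, hp3⟩ := hp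
  have hp2' : ∀ z, qh M ((p.1.right)⁻¹ z) = qh M z := by
    intro z
    have := hp2 ((p.1.right)⁻¹ z)
    rw [MulAut.apply_inv_self] at this
    exact this.symm
  refine ⟨?_, fun z => ?_, ?_⟩
  · show ((p.1⁻¹).right) _ = ((p.1⁻¹).left)⁻¹ * _ * (p.1⁻¹).left
    rw [SemidirectProduct.inv_right, SemidirectProduct.inv_left]
    simp only [MonoidHom.id_apply]
    apply (p.1.right).injective
    simp only [map_mul, map_inv, MulAut.apply_inv_self, inv_inv, hp1]
    group
  · show qh M ((p.1⁻¹).right z) = qh M z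
    rw [SemidirectProduct.inv_right]
    exact hp2' z
  · show qh M ((p.1⁻¹).left) = (p⁻¹).2
    rw [SemidirectProduct.inv_left]
    simp only [MonoidHom.id_apply, map_inv]
    rw [hp2' p.1.left, hp3]
    rfl

lemma pure_eq2 (i : Fin (M + 1)) :
    (pure i : FreeGroup (Fin (M + 1))) = FreeGroup.of i := rfl

lemma KH_good (w : FreeGroup (Fin (M + 1))) : GoodK M (KH M w) := by
  induction w using FreeGroup.induction_on with
  | C1 => rw [map_one]; exact GoodK_one
  | of i =>
    have hKH : KH M (FreeGroup.of i) =
        ((⟨(Cg M (i : ℕ))⁻¹, ρ (pureGen (m := M + 2) (i : ℕ) (M + 1))⟩ : SD M),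
          (Cg M (i : ℕ))⁻¹) := FreeGroup.lift_apply_of
    rw [hKH]
    have hiM : (i : ℕ) ≤ M := by omega
    refine ⟨?_, fun z => ?_, ?_⟩
    · show ρ (pureGen (m := M + 2) (i : ℕ) (M + 1)) _ = ((Cg M (i : ℕ))⁻¹)⁻¹ * _ * (Cg M (i : ℕ))⁻¹
      rw [ps_xg_top (i : ℕ) hiM, inv_inv]
    · exact qh_ps (i : ℕ) hiM z
    · show qh M (Cg M (i : ℕ))⁻¹ = (Cg M (i : ℕ))⁻¹
      rw [map_inv, qh_Cg (i : ℕ) hiM]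
  | inv_of i ih =>
    rw [map_inv]
    exact GoodK_inv ih
  | mul g h ihg ihh =>
    rw [map_mul]
    exact GoodK_mul ihg ihh

lemma KH_right (w : FreeGroup (Fin (M + 1))) : ((KH M w).1).right = ρ (Lm M w) := by
  have hcomp : (SemidirectProduct.rightHom.comp ((MonoidHom.fst (SD M) (F M)).comp (KH M)))
      = (ρ (M := M)).comp (Lm M) := by
    apply FreeGroup.ext_hom
    intro i
    simp only [MonoidHom.comp_apply]
    rw [show KH M (FreeGroup.of i) = _ from FreeGroup.lift_apply_of,
      show Lm M (FreeGroup.of i) = _ from FreeGroup.lift_apply_of]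
    rfl
  exact DFunLike.congr_fun hcomp w

lemma KH_snd (w : FreeGroup (Fin (M + 1))) : (KH M w).2 = LC M w := by
  have hcomp : ((MonoidHom.snd (SD M) (F M)).comp (KH M)) = LC M := by
    apply FreeGroup.ext_hom
    intro i
    simp only [MonoidHom.comp_apply]
    rw [show KH M (FreeGroup.of i) = _ from FreeGroup.lift_apply_of,
      show LC M (FreeGroup.of i) = _ from FreeGroup.lift_apply_of]
    rfl
  exact DFunLike.congr_fun hcomp w

theorem main (M : ℕ) : Function.Injective ⇑(Lm M) := by
  refine (injective_iff_map_eq_one (Lm M)).mpr fun w hw => ?_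
  obtain ⟨h1, _h2, h3⟩ := KH_good w
  set c := (KH M w).1.left with hc
  have hr : ((KH M w).1).right = 1 := by rw [KH_right w, hw, map_one]
  rw [hr, MulAut.one_apply] at h1
  have hcomm : c * xg M (M + 1) = xg M (M + 1) * c := by
    conv_lhs => rw [h1]
    group
  have hqc : qh M c = 1 := comm_qh c hcomm
  have hLC : LC M w = 1 := by rw [← KH_snd w, ← h3, hqc]
  exact LC_eq_one hLC

end PBF

lemma freeGroup_fin_zero_eq_one (w : FreeGroup (Fin 0)) : w = 1 :=
  FreeGroup.induction_on w rfl (fun x => x.elim0) (fun x _ => x.elim0)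
    (fun a b ha hb => by rw [ha, hb, mul_one])

/-- The elements `s_{1,m}, …, s_{m-1,m}` (here 0-indexed as `s_{i,m-1}`, `i = 0, …, m-2`)
freely generate a free subgroup of `Br_m` of rank `m-1`: the homomorphism from the
free group of rank `m-1` sending the `i`-th generator to `s_{i,m}` is injective. -/
theorem pure_braid_last_column_free (m : ℕ) :
    Function.Injective
      (FreeGroup.lift (fun i : Fin (m - 1) => pureGen (m := m) (i : ℕ) (m - 1))) := by
  match m with
  | 0 =>
    intro u v _
    exact (freeGroup_fin_zero_eq_one u).trans (freeGroup_fin_zero_eq_one v).symm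
  | 1 =>
    intro u v _
    exact (freeGroup_fin_zero_eq_one u).trans (freeGroup_fin_zero_eq_one v).symm
  | (M + 2) =>
    exact PBF.main M
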